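/- Let V be a finite set of size n partitioned into nonempty blocks {V_0, V_1, ..., V_D} with |V_0| = k and 1 ≤ k < n, and let I = −∑_{i=0}^D (|V_i|/n)·log(|V_i|/n). Then I equals the lower bound −(k/n)·log(k/n) − ((n−k)/n)·log((n−k)/n) if and only if D = 1 (i.e., the partition has exactly two blocks). -/

import Mathlib

/-- For a partition `{V_0, …, V_D}` of an `n`-set into nonempty blocks with
`|V_0| = k`, `1 ≤ k < n`, the entropy `I` equals the two-block lower bound
`−(k/n)·log (k/n) − ((n−k)/n)·log ((n−k)/n)` if and only if `D = 1`. -/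
theorem entropy_eq_lower_bound_iff_two_blocks
    {V : Type*} [Fintype V] [DecidableEq V] (n : ℕ) (hn : n = Fintype.card V)
    (D : ℕ) (P : Fin (D + 1) → Finset V)
    (hPne : ∀ i, (P i).Nonempty)
    (hPdisj : ∀ i i', i ≠ i' → Disjoint (P i) (P i'))
    (hPcover : Finset.univ.biUnion P = Finset.univ)
    (k : ℕ) (hk : (P 0).card = k) (hk1 : 1 ≤ k) (hkn : k < n)
    (I : ℝ) (hI : I = -(∑ i, ((P i).card : ℝ) / n * Real.log (((P i).card : ℝ) / n))) :
    I = -(k / n : ℝ) * Real.log ((k : ℝ) / n)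
          - (((n : ℝ) - k) / n) * Real.log (((n : ℝ) - k) / n) ↔ D = 1 := by
  have hn0 : 0 < n := Nat.lt_of_le_of_lt (Nat.zero_le k) hkn
  have hNpos : (0:ℝ) < n := by exact_mod_cast hn0
  have hsum : ∑ i, (P i).card = n := by
    rw [hn, ← Finset.card_univ, ← hPcover,
      Finset.card_biUnion (fun x _ y _ h => hPdisj x y h)]
  have hsplit : k + ∑ i : Fin D, (P i.succ).card = n := by
    rw [← hk, ← hsum, Fin.sum_univ_succ]
  have hM : ((n : ℝ) - k) = ((n - k : ℕ) : ℝ) := by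
    push_cast [Nat.cast_sub hkn.le]; ring
  constructor
  · intro hEq
    by_contra hD
    rcases Nat.lt_or_ge D 2 with h2 | h2
    · interval_cases D
      · simp at hsplit; omega
      · exact hD rfl
    · have hm : ∑ i : Fin D, (P i.succ).card = n - k := by omega
      have hlt : ∀ i : Fin D, (P i.succ).card < n - k := by
        intro i
        obtain ⟨j, hj⟩ := Fintype.exists_ne_of_one_lt_card (by rw [Fintype.card_fin]; omega) i
        calc (P i.succ).card < ∑ l : Fin D, (P l.succ).card :=
              Finset.single_lt_sum (f := fun l : Fin D => (P l.succ).card) hj (Finset.mem_univ i) (Finset.mem_univ j)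
                (Finset.card_pos.mpr (hPne j.succ)) (fun _ _ _ => Nat.zero_le _)
          _ = n - k := hm
      have hMpos : (0:ℝ) < ((n - k : ℕ) : ℝ) / n := by
        apply div_pos _ hNpos
        exact_mod_cast Nat.sub_pos_of_lt hkn
      haveI : Nonempty (Fin D) := ⟨⟨0, by omega⟩⟩
      have key : ∑ i : Fin D, ((P i.succ).card : ℝ) / n * Real.log (((P i.succ).card : ℝ) / n)
          < (((n - k : ℕ) : ℝ) / n) * Real.log (((n - k : ℕ) : ℝ) / n) := by
        have hterm : ∀ i ∈ (Finset.univ : Finset (Fin D)),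
            ((P i.succ).card : ℝ) / n * Real.log (((P i.succ).card : ℝ) / n)
            < ((P i.succ).card : ℝ) / n * Real.log (((n - k : ℕ) : ℝ) / n) := by
          intro i _
          have hpos : (0:ℝ) < ((P i.succ).card : ℝ) / n := by
            apply div_pos _ hNpos
            exact_mod_cast Finset.card_pos.mpr (hPne i.succ)
          refine mul_lt_mul_of_pos_left (Real.log_lt_log hpos ?_) hpos
          apply div_lt_div_of_pos_right ?_ hNpos
          exact_mod_cast hlt i
        calc ∑ i : Fin D, ((P i.succ).card : ℝ) / n * Real.log (((P i.succ).card : ℝ) / n)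
            < ∑ i : Fin D, ((P i.succ).card : ℝ) / n * Real.log (((n - k : ℕ) : ℝ) / n) :=
              Finset.sum_lt_sum_of_nonempty Finset.univ_nonempty hterm
          _ = (((n - k : ℕ) : ℝ) / n) * Real.log (((n - k : ℕ) : ℝ) / n) := by
              rw [← Finset.sum_mul, ← Finset.sum_div]
              congr 2
              exact_mod_cast congrArg (Nat.cast : ℕ → ℝ) hm
        done
      rw [hI, Fin.sum_univ_succ, hk, hM] at hEq
      linarith [key]
  · intro hD
    subst hD
    have h1 : (P 1).card = n - k := by
      rw [Fin.sum_univ_one] at hsplit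
      have : Fin.succ (0 : Fin 1) = (1 : Fin 2) := rfl
      rw [this] at hsplit
      omega
    rw [hI, Fin.sum_univ_two, hk, h1, ← hM]
    ring
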